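/- Let Y^rep be the generalized repetition code of length L (L odd) with Δ branches, 2 ≤ Δ. For every f̂0 ∈ F2^{Y(0)} there exists f0 ∈ f̂0 + {0, 𝟙} such that: (1) |f0| ≤ |f̂0|; (2) (2/L)·|f0| ≤ |δ0 f̂0|_int, where |·|_int counts violated interior checks; (3) |δ0 f0|_∂ ≤ |δ0 f̂0|_int, where |δ0 f0|_∂ counts the boundary leaves at which f0 is nonzero. That is, Y^rep is a (β0 = 2/L, η0 = 1)-coboundary expander at level 0. -/

import Mathlib

/-- Vertex set of the generalized repetition code with `Δ` branches, each branch a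
path of `n+1` vertices attached to a common root (`none`); length `L = 2*n+3` (odd),
each branch carrying `(L-1)/2 = n+1` bits. -/
abbrev RepV (Δ n : ℕ) := Option (Fin Δ × Fin (n + 1))

/-- The neighbour of the bit `(b,j)` that is closer to the root: the root for `j = 0`,
otherwise `(b, j-1)`.  Each interior check (one per edge) compares `some (b,j)` with
`repPrev (b,j)`. -/
def repPrev {Δ n : ℕ} (e : Fin Δ × Fin (n + 1)) : RepV Δ n :=
  if h : (e.2 : ℕ) = 0 then none else some (e.1, ⟨(e.2 : ℕ) - 1, by omega⟩)

/-- `|δ0 f|_int`: the number of violated interior checks of `f`. -/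
def repInt {Δ n : ℕ} (f : RepV Δ n → ZMod 2) : ℕ :=
  (Finset.univ.filter (fun e : Fin Δ × Fin (n + 1) => f (some e) ≠ f (repPrev e))).card

/-- `|δ0 f|_∂`: the number of boundary leaves at which `f` is nonzero. -/
def repBd {Δ n : ℕ} (f : RepV Δ n → ZMod 2) : ℕ :=
  (Finset.univ.filter (fun b : Fin Δ => f (some (b, Fin.last n)) ≠ 0)).card


/-- interior-check count for a path of `m` edges read from a ℕ-indexed function. -/
def pInt (g : ℕ → ZMod 2) (r : ZMod 2) (m : ℕ) : ℕ :=
  ((Finset.range m).filter (fun j => g j ≠ if j = 0 then r else g (j-1))).card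

def pOnes (g : ℕ → ZMod 2) (m : ℕ) : ℕ :=
  ((Finset.range m).filter (fun j => g j ≠ 0)).card

lemma pOnes_le (g : ℕ → ZMod 2) (m : ℕ) : pOnes g m ≤ m := by
  simpa [pOnes] using Finset.card_filter_le (Finset.range m) _

lemma pInt_succ (g : ℕ → ZMod 2) (r : ZMod 2) (m : ℕ) :
    pInt g r (m+1) = pInt g r m + (if g m ≠ (if m = 0 then r else g (m-1)) then 1 else 0) := by
  unfold pInt
  rw [Finset.range_add_one, Finset.filter_insert]
  by_cases h : g m ≠ (if m = 0 then r else g (m-1))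
  · rw [if_pos h, if_pos h, Finset.card_insert_of_notMem (by simp)]
  · rw [if_neg h, if_neg h, Nat.add_zero]

lemma pInt_zero_const (g : ℕ → ZMod 2) (r : ZMod 2) (m : ℕ) (h : pInt g r m = 0) :
    ∀ j < m, g j = r := by
  induction m with
  | zero => omega
  | succ m ih =>
    rw [pInt_succ] at h
    have h1 : pInt g r m = 0 := by omega
    have h2 : g m = (if m = 0 then r else g (m-1)) := by
      by_contra hc; simp [hc] at h
    intro j hj
    rcases Nat.lt_succ_iff_lt_or_eq.mp hj with hj | hj
    · exact ih h1 j hj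
    · subst hj
      rcases Nat.eq_zero_or_pos j with h0 | h0
      · subst h0; simpa using h2
      · have hr := ih h1 (j-1) (by omega)
        rw [h2, if_neg (by omega : ¬ j = 0), hr]

lemma pInt_parity (g : ℕ → ZMod 2) (r : ZMod 2) (m : ℕ) :
    pInt g r (m+1) % 2 = if g m = r then 0 else 1 := by
  induction m with
  | zero =>
    rw [pInt_succ]
    simp only [pInt, Finset.range_zero, Finset.filter_empty, Finset.card_empty, if_pos rfl]
    by_cases h : g 0 = r <;> simp [h]
  | succ m ih =>
    rw [pInt_succ]
    have e : (if m+1 = 0 then r else g (m+1-1)) = g m := by simp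
    rw [e]
    have key : ∀ a b c : ZMod 2, ¬a = b → ¬b = c → a = c := by decide
    by_cases h1 : g (m+1) = g m
    · rw [if_neg (not_not_intro h1), h1, Nat.add_zero]
      exact ih
    · rw [if_pos h1]
      by_cases h2 : g m = r
      · rw [if_neg (fun h => h1 (h.trans h2.symm))]
        rw [if_pos h2] at ih
        omega
      · rw [if_pos (key _ _ _ h1 h2)]
        rw [if_neg h2] at ih
        omega

/-- Branch reading function. -/
def gB {Δ n : ℕ} (f : RepV Δ n → ZMod 2) (b : Fin Δ) (j : ℕ) : ZMod 2 :=
  f (some (b, ⟨min j n, Nat.lt_succ_of_le (Nat.min_le_right j n)⟩))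

lemma gB_eq {Δ n : ℕ} (f : RepV Δ n → ZMod 2) (b : Fin Δ) (j : ℕ) (hj : j < n + 1) :
    gB f b j = f (some (b, ⟨j, hj⟩)) := by
  have e : (⟨min j n, Nat.lt_succ_of_le (Nat.min_le_right j n)⟩ : Fin (n+1)) = ⟨j, hj⟩ :=
    Fin.ext (show min j n = j by omega)
  unfold gB
  rw [e]

lemma decomp_int {Δ n : ℕ} (f : RepV Δ n → ZMod 2) :
    repInt f = ∑ b : Fin Δ, pInt (gB f b) (f none) (n+1) := by
  unfold repInt pInt
  rw [Finset.card_filter]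
  rw [Fintype.sum_prod_type]
  refine Finset.sum_congr rfl (fun b _ => ?_)
  rw [Finset.card_filter, ← Fin.sum_univ_eq_sum_range]
  refine Finset.sum_congr rfl (fun j _ => ?_)
  congr 1
  have e1 : f (some (b, j)) = gB f b (j : ℕ) := by
    rw [gB_eq f b _ j.isLt]
  have e2 : f (repPrev (b, j)) = (if (j : ℕ) = 0 then f none else gB f b ((j : ℕ)-1)) := by
    unfold repPrev
    by_cases h : (j : ℕ) = 0
    · simp [h]
    · rw [dif_neg h, if_neg h, gB_eq f b _ (by omega)]
  rw [e1, e2]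

lemma decomp_norm {Δ n : ℕ} (f : RepV Δ n → ZMod 2) :
    hammingNorm f = (if f none ≠ 0 then 1 else 0) + ∑ b : Fin Δ, pOnes (gB f b) (n+1) := by
  unfold hammingNorm pOnes
  rw [Finset.card_filter, Fintype.sum_option, Fintype.sum_prod_type]
  congr 1
  refine Finset.sum_congr rfl (fun b _ => ?_)
  rw [Finset.card_filter, ← Fin.sum_univ_eq_sum_range]
  refine Finset.sum_congr rfl (fun j _ => ?_)
  rw [gB_eq f b _ j.isLt]

lemma decomp_bd {Δ n : ℕ} (f : RepV Δ n → ZMod 2) :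
    repBd f = ∑ b : Fin Δ, (if gB f b n ≠ 0 then 1 else 0) := by
  unfold repBd
  rw [Finset.card_filter]
  refine Finset.sum_congr rfl (fun b _ => ?_)
  rw [gB_eq f b n (by omega)]
  rfl

lemma compl_int {Δ n : ℕ} (f : RepV Δ n → ZMod 2) :
    repInt (f + fun _ => 1) = repInt f := by
  unfold repInt
  congr 1
  refine Finset.filter_congr (fun e _ => ?_)
  simp only [Pi.add_apply]
  constructor
  · intro h hc; exact h (by rw [hc])
  · intro h hc; exact h (add_right_cancel hc)

lemma compl_norm {Δ n : ℕ} (f : RepV Δ n → ZMod 2) :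
    hammingNorm f + hammingNorm (f + fun _ => 1) = Δ * (n+1) + 1 := by
  unfold hammingNorm
  have e : (Finset.univ.filter fun x : RepV Δ n => (f + fun _ => 1 : RepV Δ n → ZMod 2) x ≠ 0)
      = Finset.univ.filter fun x : RepV Δ n => ¬ f x ≠ 0 := by
    refine Finset.filter_congr (fun x _ => ?_)
    simp only [Pi.add_apply]
    have h : ∀ a : ZMod 2, a + 1 ≠ 0 ↔ ¬ a ≠ 0 := by decide
    simpa using h (f x)
  rw [e, Finset.card_filter_add_card_filter_not]
  simp only [Finset.card_univ, Fintype.card_option, Fintype.card_prod, Fintype.card_fin]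

/-- Master combinatorial lemma. -/
lemma master {Δ n : ℕ} (hΔ : 2 ≤ Δ) (f : RepV Δ n → ZMod 2)
    (hmin : 2 * hammingNorm f ≤ Δ * (n+1) + 1) :
    2 * hammingNorm f ≤ (2*n+3) * repInt f ∧ repBd f ≤ repInt f := by
  have hnorm := decomp_norm f
  have hint := decomp_int f
  have hbd := decomp_bd f
  by_cases hr0 : f none = 0
  · constructor
    · rw [hnorm, hint, if_neg (not_not_intro hr0), Nat.zero_add, Finset.mul_sum,
        Finset.mul_sum]
      refine Finset.sum_le_sum (fun b _ => ?_)
      rcases Nat.eq_zero_or_pos (pInt (gB f b) (f none) (n+1)) with h0 | h0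
      · have hc := pInt_zero_const _ _ _ h0
        have hz : pOnes (gB f b) (n+1) = 0 := by
          unfold pOnes
          rw [Finset.card_eq_zero, Finset.filter_eq_empty_iff]
          intro j hj
          simp only [Finset.mem_range] at hj
          simp [hc j hj, hr0]
        simp [hz, h0]
      · have h1 := pOnes_le (gB f b) (n+1)
        calc 2 * pOnes (gB f b) (n+1) ≤ (2*n+3) * 1 := by omega
          _ ≤ (2*n+3) * pInt (gB f b) (f none) (n+1) := Nat.mul_le_mul_left _ h0
    · rw [hbd, hint]
      refine Finset.sum_le_sum (fun b _ => ?_)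
      by_cases hl : gB f b n ≠ 0
      · rw [if_pos hl]
        rcases Nat.eq_zero_or_pos (pInt (gB f b) (f none) (n+1)) with h0 | h0
        · exact absurd ((pInt_zero_const _ _ _ h0 n (by omega)).trans hr0) hl
        · omega
      · simp [hl]
  · -- root is one
    have hr1 : f none = 1 := by
      have h : ∀ a : ZMod 2, a ≠ 0 → a = 1 := by decide
      exact h _ hr0
    have hconstO : ∀ b : Fin Δ, pInt (gB f b) (f none) (n+1) = 0 →
        pOnes (gB f b) (n+1) = n + 1 ∧ gB f b n = 1 := by
      intro b h0
      have hc := pInt_zero_const _ _ _ h0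
      refine ⟨?_, by rw [hc n (by omega), hr1]⟩
      unfold pOnes
      rw [Finset.filter_true_of_mem, Finset.card_range]
      intro j hj
      rw [hc j (Finset.mem_range.mp hj), hr1]
      decide
    set k := (Finset.univ.filter (fun b : Fin Δ =>
        pInt (gB f b) (f none) (n+1) = 0)).card with hkdef
    have hkO : k * (n+1) ≤ ∑ b : Fin Δ, pOnes (gB f b) (n+1) := by
      calc k * (n+1)
          = ∑ _b ∈ Finset.univ.filter (fun b : Fin Δ =>
              pInt (gB f b) (f none) (n+1) = 0), (n+1) := by
            rw [Finset.sum_const, smul_eq_mul]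
        _ = ∑ b ∈ Finset.univ.filter (fun b : Fin Δ =>
              pInt (gB f b) (f none) (n+1) = 0), pOnes (gB f b) (n+1) := by
            refine Finset.sum_congr rfl (fun b hb => ?_)
            exact ((hconstO b (Finset.mem_filter.mp hb).2).1).symm
        _ ≤ ∑ b : Fin Δ, pOnes (gB f b) (n+1) := by
            refine Finset.sum_le_sum_of_subset (Finset.filter_subset _ _)
    have hw : hammingNorm f = 1 + ∑ b : Fin Δ, pOnes (gB f b) (n+1) := by
      rw [hnorm, if_pos hr0]
    have hmin' : 2 * (1 + ∑ b : Fin Δ, pOnes (gB f b) (n+1)) ≤ Δ * (n+1) + 1 := by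
      rw [← hw]; exact hmin
    have hkΔ : 2 * k + 1 ≤ Δ := by
      by_contra hc
      push_neg at hc
      have h3 : Δ * (n+1) ≤ 2 * (k * (n+1)) := by
        calc Δ * (n+1) ≤ (2*k) * (n+1) := Nat.mul_le_mul_right _ (by omega)
          _ = 2 * (k * (n+1)) := by ring
      omega
    have hΔI : Δ ≤ (∑ b : Fin Δ, pInt (gB f b) (f none) (n+1)) + k := by
      have h1 : ∀ b : Fin Δ, 1 ≤ pInt (gB f b) (f none) (n+1) +
          (if pInt (gB f b) (f none) (n+1) = 0 then 1 else 0) := by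
        intro b
        by_cases h0 : pInt (gB f b) (f none) (n+1) = 0
        · rw [if_pos h0]; omega
        · rw [if_neg h0]; omega
      calc Δ = ∑ _b : Fin Δ, 1 := by simp
        _ ≤ ∑ b : Fin Δ, (pInt (gB f b) (f none) (n+1) +
            (if pInt (gB f b) (f none) (n+1) = 0 then 1 else 0)) :=
            Finset.sum_le_sum (fun b _ => h1 b)
        _ = (∑ b : Fin Δ, pInt (gB f b) (f none) (n+1)) + k := by
            rw [Finset.sum_add_distrib, hkdef, Finset.card_filter]
    constructor
    · rw [hint]
      have h1 : Δ + 1 ≤ 2 * (∑ b : Fin Δ, pInt (gB f b) (f none) (n+1)) := by omega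
      have h2 : (2*n+3) * (Δ + 1) ≤
          (2*n+3) * (2 * ∑ b : Fin Δ, pInt (gB f b) (f none) (n+1)) :=
        Nat.mul_le_mul_left _ h1
      have h4 : 2 * (Δ * (n+1) + 1) ≤ (2*n+3) * (Δ+1) := by nlinarith
      have h5 : (2*n+3) * (2 * ∑ b : Fin Δ, pInt (gB f b) (f none) (n+1))
          = 2 * ((2*n+3) * ∑ b : Fin Δ, pInt (gB f b) (f none) (n+1)) := by ring
      omega
    · rw [hbd, hint]
      have hper : ∀ b : Fin Δ, (if gB f b n ≠ 0 then 1 else 0) + 1 ≤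
          pInt (gB f b) (f none) (n+1) +
          2 * (if pInt (gB f b) (f none) (n+1) = 0 then 1 else 0) := by
        intro b
        by_cases h0 : pInt (gB f b) (f none) (n+1) = 0
        · rw [if_pos h0, h0, if_pos (by rw [(hconstO b h0).2]; decide)]
        · rw [if_neg h0]
          by_cases hl : gB f b n ≠ 0
          · have hl1 : gB f b n = 1 := by
              have h : ∀ a : ZMod 2, a ≠ 0 → a = 1 := by decide
              exact h _ hl
            have hpar := pInt_parity (gB f b) (f none) n
            rw [if_pos (by rw [hl1, hr1])] at hpar
            rw [if_pos hl]
            omega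
          · rw [if_neg hl]
            omega
      have hsum : (∑ b : Fin Δ, (if gB f b n ≠ 0 then 1 else 0)) + Δ
          ≤ (∑ b : Fin Δ, pInt (gB f b) (f none) (n+1)) + 2 * k := by
        have e1 : (∑ b : Fin Δ, (if gB f b n ≠ 0 then 1 else 0)) + Δ
            = ∑ b : Fin Δ, ((if gB f b n ≠ 0 then 1 else 0) + 1) := by
          rw [Finset.sum_add_distrib]
          simp
        have e2 : (∑ b : Fin Δ, (pInt (gB f b) (f none) (n+1) +
            2 * (if pInt (gB f b) (f none) (n+1) = 0 then 1 else 0)))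
            = (∑ b : Fin Δ, pInt (gB f b) (f none) (n+1)) + 2 * k := by
          rw [Finset.sum_add_distrib, ← Finset.mul_sum, hkdef, Finset.card_filter]
        rw [e1, ← e2]
        exact Finset.sum_le_sum (fun b _ => hper b)
      omega


/-- The generalized repetition code of length L (odd) with Δ ≥ 2 branches
is a (β0 = 2/L, η0 = 1)-coboundary expander at level 0: for every fhat0 there is
f0 ∈ fhat0 + {0,𝟙} with |f0| ≤ |fhat0|, (2/L)|f0| ≤ |δ0 fhat0|_int, and |δ0 f0|_∂ ≤ |δ0 fhat0|_int. -/
theorem stmt_4 (Δ n : ℕ) (hΔ : 2 ≤ Δ) (L : ℕ) (hL : L = 2 * n + 3)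
    (fhat0 : RepV Δ n → ZMod 2) :
    ∃ f0 : RepV Δ n → ZMod 2,
      (f0 = fhat0 ∨ f0 = fhat0 + fun _ => 1) ∧
      hammingNorm f0 ≤ hammingNorm fhat0 ∧
      (2 / (L : ℝ)) * (hammingNorm f0 : ℝ) ≤ (repInt fhat0 : ℝ) ∧
      (repBd f0 : ℝ) ≤ (repInt fhat0 : ℝ) := by
  subst hL
  have hLpos : (0:ℝ) < ((2*n+3 : ℕ) : ℝ) := by exact_mod_cast (by omega : 0 < 2*n+3)
  have hcn := compl_norm (Δ := Δ) (n := n) fhat0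
  by_cases hcmp : hammingNorm fhat0 ≤ hammingNorm (fhat0 + fun _ => 1)
  · obtain ⟨ha, hb⟩ := master hΔ fhat0 (by omega)
    refine ⟨fhat0, Or.inl rfl, le_refl _, ?_, by exact_mod_cast hb⟩
    rw [div_mul_eq_mul_div, div_le_iff₀ hLpos]
    have h : 2 * hammingNorm fhat0 ≤ repInt fhat0 * (2*n+3) := by
      calc 2 * hammingNorm fhat0 ≤ (2*n+3) * repInt fhat0 := ha
        _ = repInt fhat0 * (2*n+3) := Nat.mul_comm _ _
    exact_mod_cast h
  · push_neg at hcmp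
    obtain ⟨ha, hb⟩ := master hΔ (fhat0 + fun _ => 1) (by omega)
    have hci := compl_int (Δ := Δ) (n := n) fhat0
    refine ⟨fhat0 + fun _ => 1, Or.inr rfl, le_of_lt hcmp, ?_, ?_⟩
    · rw [div_mul_eq_mul_div, div_le_iff₀ hLpos, ← hci]
      have h : 2 * hammingNorm (fhat0 + fun _ => 1) ≤ repInt (fhat0 + fun _ => 1) * (2*n+3) := by
        calc 2 * hammingNorm (fhat0 + fun _ => 1)
            ≤ (2*n+3) * repInt (fhat0 + fun _ => 1) := ha
          _ = repInt (fhat0 + fun _ => 1) * (2*n+3) := Nat.mul_comm _ _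
      exact_mod_cast h
    · rw [← hci]; exact_mod_cast hb
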